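/- arXiv:0710.1784 — 7 statements merged into one kernel-verified Lean document; each statement's English description precedes it below -/
import Mathlib

section
/- The treedoc path order coincides with infix traversal: for any binary tree with nodes labeled by their paths, path p precedes path q in the infix (in-order) enumeration of the tree's nodes if and only if p < q in the treedoc path order. -/
def tlt (p q : List Bool) : Prop :=
  (∃ r, q = p ++ true :: r) ∨
  (∃ r, p = q ++ false :: r) ∨
  (∃ c r1 r2, p = c ++ false :: r1 ∧ q = c ++ true :: r2)

/-- Binary trees with an optional payload at each node. -/
inductive BTree (A : Type) : Type
  | leaf : BTree A
  | node : BTree A → Option A → BTree A → BTree A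

/-- Infix (in-order) enumeration of the paths of the nodes of a tree,
    `pre` being the path of the root. -/
def infixPaths {A : Type} : BTree A → List Bool → List (List Bool)
  | .leaf, _ => []
  | .node l _ r, pre =>
      infixPaths l (pre ++ [false]) ++ [pre] ++ infixPaths r (pre ++ [true])

def gval : List Bool → ℚ
  | [] => 0
  | b :: r => (if b then (1:ℚ) else -1) / 2 + gval r / 2

lemma gval_bounds : ∀ s, -1 < gval s ∧ gval s < 1 := by
  intro s
  induction s with
  | nil => norm_num [gval]
  | cons b r ih =>
    rcases ih with ⟨h1, h2⟩
    cases b <;> simp [gval] <;> constructor <;> linarith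

lemma gval_append (p s : List Bool) :
    gval (p ++ s) = gval p + gval s / 2 ^ p.length := by
  induction p with
  | nil => simp [gval]
  | cons b r ih =>
    simp [gval, ih, pow_succ]
    ring

lemma tlt_lt {p q : List Bool} (h : tlt p q) : gval p < gval q := by
  rcases h with ⟨r, hr⟩ | ⟨r, hr⟩ | ⟨c, r1, r2, h1, h2⟩
  · subst hr
    rw [gval_append]
    have := (gval_bounds r).1
    have hpos : (0:ℚ) < gval (true :: r) := by simp [gval]; linarith
    have h2 : (0:ℚ) < 2 ^ p.length := by positivity
    have : 0 < gval (true :: r) / 2 ^ p.length := by positivity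
    linarith
  · subst hr
    rw [gval_append]
    have := (gval_bounds r).2
    have hneg : gval (false :: r) < 0 := by simp [gval]; linarith
    have h2 : (0:ℚ) < 2 ^ q.length := by positivity
    have : gval (false :: r) / 2 ^ q.length < 0 := div_neg_of_neg_of_pos hneg h2
    linarith
  · subst h1; subst h2
    rw [gval_append, gval_append]
    have hb1 := (gval_bounds r1).2
    have hb2 := (gval_bounds r2).1
    have hneg : gval (false :: r1) < 0 := by simp [gval]; linarith
    have hpos : (0:ℚ) < gval (true :: r2) := by simp [gval]; linarith
    have h2 : (0:ℚ) < 2 ^ c.length := by positivity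
    have hlt : gval (false :: r1) / 2 ^ c.length < gval (true :: r2) / 2 ^ c.length := by
      apply div_lt_div_of_pos_right _ h2
      linarith
    linarith

lemma tlt_asymm {p q : List Bool} (h : tlt p q) : ¬ tlt q p :=
  fun h' => absurd (tlt_lt h') (not_lt.mpr (le_of_lt (tlt_lt h)))

lemma mem_infixPaths {A : Type} :
    ∀ (t : BTree A) (pre x : List Bool), x ∈ infixPaths t pre → ∃ s, x = pre ++ s := by
  intro t
  induction t with
  | leaf => simp [infixPaths]
  | node l o r ihl ihr =>
    intro pre x hx
    simp only [infixPaths, List.mem_append, List.mem_singleton] at hx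
    rcases hx with (hx | hx) | hx
    · obtain ⟨s, hs⟩ := ihl _ _ hx
      exact ⟨false :: s, by simp [hs]⟩
    · exact ⟨[], by simp [hx]⟩
    · obtain ⟨s, hs⟩ := ihr _ _ hx
      exact ⟨true :: s, by simp [hs]⟩

lemma infixPaths_pairwise {A : Type} :
    ∀ (t : BTree A) (pre : List Bool), (infixPaths t pre).Pairwise tlt := by
  intro t
  induction t with
  | leaf => simp [infixPaths]
  | node l o r ihl ihr =>
    intro pre
    simp only [infixPaths]
    rw [List.pairwise_append]
    refine ⟨?_, ihr _, ?_⟩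
    · rw [List.pairwise_append]
      refine ⟨ihl _, List.pairwise_singleton _ _, ?_⟩
      intro a ha b hb
      obtain ⟨s, hs⟩ := mem_infixPaths _ _ _ ha
      simp only [List.mem_singleton] at hb
      subst hb
      right; left
      exact ⟨s, by simp [hs]⟩
    · intro a ha b hb
      obtain ⟨sb, hsb⟩ := mem_infixPaths _ _ _ hb
      simp only [List.mem_append, List.mem_singleton] at ha
      rcases ha with ha | ha
      · obtain ⟨sa, hsa⟩ := mem_infixPaths _ _ _ ha
        right; right
        exact ⟨pre, sa, sb, by simp [hsa], by simp [hsb]⟩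
      · subst ha
        left
        exact ⟨sb, by simp [hsb]⟩

lemma sublist_of_pairwise {α : Type*} {R : α → α → Prop}
    (asym : ∀ a b, R a b → ¬ R b a) :
    ∀ (l : List α), l.Pairwise R → ∀ p q, p ∈ l → q ∈ l → R p q → [p, q].Sublist l := by
  intro l
  induction l with
  | nil => simp
  | cons x xs ih =>
    intro hpw p q hp hq hR
    rw [List.pairwise_cons] at hpw
    rcases List.mem_cons.mp hp with hp1 | hp1
    · subst hp1
      rcases List.mem_cons.mp hq with hq1 | hq1
      · exact absurd hR (by rw [hq1]; exact asym _ _ (hq1 ▸ hR))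
      · exact (List.singleton_sublist.mpr hq1).cons₂ p
    · rcases List.mem_cons.mp hq with hq1 | hq1
      · exact absurd hR (hq1 ▸ asym _ _ (hpw.1 p hp1))
      · exact (ih hpw.2 p q hp1 hq1 hR).cons x

/-- The treedoc path order coincides with infix traversal order. -/
theorem tlt_iff_infix {A : Type} (t : BTree A) (p q : List Bool)
    (hp : p ∈ infixPaths t []) (hq : q ∈ infixPaths t []) (hne : p ≠ q) :
    [p, q].Sublist (infixPaths t []) ↔ tlt p q := by
  constructor
  · intro h
    have hpw := (infixPaths_pairwise t []).sublist h
    rw [List.pairwise_cons] at hpw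
    exact hpw.1 q (List.mem_singleton_self q)
  · intro h
    exact sublist_of_pairwise (fun a b => tlt_asymm) _ (infixPaths_pairwise t []) p q hp hq h
end

section
/- The treedoc path order is dense in the sense required for identifier generation: for any two paths p < q, the path N produced by the rule (if p is an ancestor of q, take N = q ++ [0]; if q is an ancestor of p, take N = p ++ [1]; otherwise take N = p ++ [1]) satisfies p < N, and in the first two cases also N < q. -/
/-- `p` is an ancestor of `q`: `p` is a proper prefix of `q`. -/
def ancestor (p q : List Bool) : Prop := ∃ r, r ≠ [] ∧ q = p ++ r

/-- The new-identifier rule produces a fresh path correctly placed between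
    `p` and `q`. -/
theorem newuid_between (p q : List Bool) (hpq : tlt p q) :
    (ancestor p q → tlt p (q ++ [false]) ∧ tlt (q ++ [false]) q) ∧
    (ancestor q p → tlt p (p ++ [true]) ∧ tlt (p ++ [true]) q) ∧
    (¬ ancestor p q → ¬ ancestor q p → tlt p (p ++ [true])) := by
  refine ⟨fun h => ⟨?_, Or.inr (Or.inl ⟨[], rfl⟩)⟩,
    fun h => ⟨Or.inl ⟨[], rfl⟩, ?_⟩, fun _ _ => Or.inl ⟨[], rfl⟩⟩
  · rcases hpq with ⟨r, hr⟩ | ⟨r, hr⟩ | ⟨c, r1, r2, h1, h2⟩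
    · exact Or.inl ⟨r ++ [false], by simp [hr]⟩
    · obtain ⟨s, hs, hqs⟩ := h
      rw [hr] at hqs
      have := congrArg List.length hqs
      simp at this
    · obtain ⟨s, hs, hqs⟩ := h
      rw [h1, h2, List.append_assoc] at hqs
      have := List.append_cancel_left hqs
      simp at this
  · rcases hpq with ⟨r, hr⟩ | ⟨r, hr⟩ | ⟨c, r1, r2, h1, h2⟩
    · obtain ⟨s, hs, hps⟩ := h
      rw [hr] at hps
      have := congrArg List.length hps
      simp at this
    · exact Or.inr (Or.inl ⟨r ++ [true], by simp [hr]⟩)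
    · obtain ⟨s, hs, hps⟩ := h
      rw [h1, h2, List.append_assoc] at hps
      have := List.append_cancel_left hps
      simp at this
end

section
/- If p < q in the treedoc path order and q is not a descendant of p (p is not a prefix of q), then p ++ [1] ≤ q in the treedoc path order extended to its reflexive closure; in particular p < p ++ [1] and p++[1] < q or p++[1] = q. -/
theorem right_child_le (p q : List Bool) (hpq : tlt p q)
    (hnpre : ¬ p <+: q) :
    tlt p (p ++ [true]) ∧ (tlt (p ++ [true]) q ∨ p ++ [true] = q) := by
  constructor
  · exact Or.inl ⟨[], rfl⟩
  · rcases hpq with ⟨r, hr⟩ | ⟨r, hr⟩ | ⟨c, r1, r2, h1, h2⟩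
    · exact absurd ⟨true :: r, hr.symm⟩ hnpre
    · left; right; left
      exact ⟨r ++ [true], by simp [hr]⟩
    · left; right; right
      exact ⟨c, r1 ++ [true], r2, by simp [h1], h2⟩
end

section
/- Eventual consistency of CRDTs (convergence theorem): let V be a finite set of operations with a happens-before relation H (a strict partial order), and suppose any two H-incomparable (concurrent) operations commute as state transformers. Then any two enumerations of V that are linear extensions of H, applied sequentially to a common initial state, produce the same final state. -/
private lemma crdt_fold_swap {S ι : Type} (f : ι → S → S) (a : ι) :
    ∀ (xs ys : List ι) (s : S),
      (∀ x ∈ xs, (f a) ∘ (f x) = (f x) ∘ (f a)) →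
      (xs ++ a :: ys).foldl (fun s i => f i s) s
        = (xs ++ ys).foldl (fun s i => f i s) (f a s) := by
  intro xs
  induction xs with
  | nil => intro ys s _; simp
  | cons b xs ih =>
    intro ys s hc
    simp only [List.cons_append, List.foldl_cons]
    rw [ih ys (f b s) (fun x hx => hc x (List.mem_cons_of_mem _ hx))]
    have : f a (f b s) = f b (f a s) := congrFun (hc b (List.mem_cons_self)) s
    rw [this]

private lemma crdt_aux {S ι : Type} (f : ι → S → S) (hb : ι → ι → Prop) :
    ∀ (l1 l2 : List ι), l1.Perm l2 → l1.Nodup →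
      (∀ i ∈ l1, ∀ j ∈ l1, ¬ hb i j → ¬ hb j i → (f i) ∘ (f j) = (f j) ∘ (f i)) →
      l1.Pairwise (fun i j => ¬ hb j i) →
      l2.Pairwise (fun i j => ¬ hb j i) →
      ∀ s0 : S, l1.foldl (fun s i => f i s) s0 = l2.foldl (fun s i => f i s) s0 := by
  intro l1
  induction l1 with
  | nil =>
    intro l2 hp _ _ _ _ s0
    rw [hp.nil_eq]
  | cons a t ih =>
    intro l2 hp hnd hcomm e1 e2 s0
    have ha2 : a ∈ l2 := hp.mem_iff.mp (List.mem_cons_self)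
    obtain ⟨xs, ys, rfl⟩ := List.append_of_mem ha2
    have hperm : t.Perm (xs ++ ys) := by
      have := hp.trans List.perm_middle
      exact this.cons_inv
    have hnd2 : (xs ++ a :: ys).Nodup := hp.nodup hnd
    have hanotxs : a ∉ xs := by
      intro hx
      exact (List.disjoint_of_nodup_append hnd2) hx (List.mem_cons_self)
    -- each x ∈ xs commutes with a
    have hxc : ∀ x ∈ xs, (f a) ∘ (f x) = (f x) ∘ (f x) → True := fun _ _ _ => trivial
    have hswap : ∀ x ∈ xs, (f a) ∘ (f x) = (f x) ∘ (f a) := by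
      intro x hx
      have hxl2 : x ∈ xs ++ a :: ys := List.mem_append_left _ hx
      have hxt : x ∈ t := by
        have : x ∈ a :: t := hp.mem_iff.mpr hxl2
        rcases List.mem_cons.mp this with h | h
        · exact absurd (h ▸ hx) hanotxs
        · exact h
      have h1 : ¬ hb x a := (List.pairwise_cons.mp e1).1 x hxt
      have h2 : ¬ hb a x := by
        have := (List.pairwise_append.mp e2).2.2 x hx a (List.mem_cons_self)
        exact this
      exact hcomm a (List.mem_cons_self) x (List.mem_cons_of_mem _ hxt) h2 h1
    rw [crdt_fold_swap f a xs ys s0 hswap]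
    simp only [List.foldl_cons]
    apply ih (xs ++ ys) hperm (List.nodup_cons.mp hnd).2
      (fun i hi j hj hij hji => hcomm i (List.mem_cons_of_mem _ hi) j (List.mem_cons_of_mem _ hj) hij hji)
      (List.pairwise_cons.mp e1).2
    · exact e2.sublist (by
        apply List.Sublist.append_left
        exact List.sublist_cons_self a ys)

/-- Eventual consistency of CRDTs: any two linear extensions of the
    happens-before order, applied from a common initial state, yield the
    same final state. -/
theorem crdt_convergence {S ι : Type} [DecidableEq ι]
    (V : Finset ι) (f : ι → S → S) (hb : ι → ι → Prop)
    (hirr : ∀ i, ¬ hb i i)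
    (htrans : ∀ i j k, hb i j → hb j k → hb i k)
    (hcomm : ∀ i ∈ V, ∀ j ∈ V, ¬ hb i j → ¬ hb j i →
      (f i) ∘ (f j) = (f j) ∘ (f i))
    (l1 l2 : List ι)
    (h1 : l1.Perm V.toList) (h2 : l2.Perm V.toList)
    (e1 : l1.Pairwise (fun i j => ¬ hb j i))
    (e2 : l2.Pairwise (fun i j => ¬ hb j i))
    (s0 : S) :
    l1.foldl (fun s i => f i s) s0 = l2.foldl (fun s i => f i s) s0 := by
  have hp : l1.Perm l2 := h1.trans h2.symm
  have hnd : l1.Nodup := h1.nodup_iff.mpr V.nodup_toList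
  apply crdt_aux f hb l1 l2 hp hnd ?_ e1 e2
  intro i hi j hj hij hji
  exact hcomm i (by simpa using h1.mem_iff.mp hi) j (by simpa using h1.mem_iff.mp hj) hij hji
end

section
/- Any two linear extensions of a partial order on a finite set are connected by a sequence of adjacent transpositions of incomparable elements: if L1 and L2 are both enumerations of a finite set V compatible with a strict partial order ≺, then L2 can be obtained from L1 by finitely many swaps of adjacent elements x, y with neither x ≺ y nor y ≺ x, with every intermediate list also a linear extension of ≺. -/
/-- `l` is a linear extension of `≺` enumerating the finite set `V`. -/
def IsLinExt {ι : Type} [DecidableEq ι] (V : Finset ι) (prec : ι → ι → Prop)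
    (l : List ι) : Prop :=
  l.Perm V.toList ∧ l.Pairwise (fun x y => ¬ prec y x)

/-- One adjacent transposition of two incomparable elements, landing on a
    linear extension. -/
def SwapStep {ι : Type} [DecidableEq ι] (V : Finset ι) (prec : ι → ι → Prop)
    (l l' : List ι) : Prop :=
  (∃ l1 x y l2, l = l1 ++ x :: y :: l2 ∧ l' = l1 ++ y :: x :: l2 ∧
      ¬ prec x y ∧ ¬ prec y x) ∧
  IsLinExt V prec l'

private lemma erase_toList_perm {ι : Type} [DecidableEq ι] (s : Finset ι) (a : ι) :
    (s.erase a).toList.Perm (s.toList.erase a) := by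
  rw [← Multiset.coe_eq_coe]
  simp only [Finset.toList]
  rw [Multiset.coe_toList, ← Multiset.coe_erase, Multiset.coe_toList, Finset.erase_val]

private lemma pairwise_swap {ι : Type} {R : ι → ι → Prop} {u v : List ι} {x y : ι}
    (h : (u ++ x :: y :: v).Pairwise R) (hyx : R y x) :
    (u ++ y :: x :: v).Pairwise R := by
  simp only [List.pairwise_append, List.pairwise_cons, List.mem_cons] at h ⊢
  obtain ⟨hu, ⟨hx, hy, hv⟩, hcross⟩ := h
  refine ⟨hu, ⟨?_, ?_, hv⟩, ?_⟩
  · rintro z (rfl | hz)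
    · exact hyx
    · exact hy z hz
  · intro z hz; exact hx z (Or.inr hz)
  · rintro z hz w hw
    rcases hw with h | h | h
    · exact hcross z hz w (Or.inr (Or.inl h))
    · exact hcross z hz w (Or.inl h)
    · exact hcross z hz w (Or.inr (Or.inr h))

private lemma tail_linext {ι : Type} [DecidableEq ι] {V : Finset ι} {prec : ι → ι → Prop}
    {a : ι} {t : List ι} (h : IsLinExt V prec (a :: t)) :
    IsLinExt (V.erase a) prec t := by
  obtain ⟨hperm, hpw⟩ := h
  have hnd : (a :: t).Nodup := hperm.nodup_iff.2 V.nodup_toList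
  have hat : a ∉ t := by simp [List.nodup_cons] at hnd; exact hnd.1
  have h1 : t.Perm (V.toList.erase a) := by
    have := hperm.erase a
    rwa [List.erase_cons_head] at this
  exact ⟨h1.trans (erase_toList_perm V a).symm, hpw.of_cons⟩

private lemma bubble {ι : Type} [DecidableEq ι] (V : Finset ι) (prec : ι → ι → Prop)
    (a : ι) (p q : List ι) (hle : IsLinExt V prec (p ++ a :: q))
    (hp : ∀ x ∈ p, ¬ prec x a ∧ ¬ prec a x) :
    Relation.ReflTransGen (SwapStep V prec) (p ++ a :: q) (a :: (p ++ q)) := by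
  induction p using List.reverseRecOn generalizing q with
  | nil => exact Relation.ReflTransGen.refl
  | append_singleton p' b ih =>
    have hb : ¬ prec b a ∧ ¬ prec a b := hp b (by simp)
    have heq : (p' ++ [b]) ++ a :: q = p' ++ b :: a :: q := by simp
    have hle' : IsLinExt V prec (p' ++ a :: b :: q) := by
      constructor
      · refine (List.Perm.append_left p' (List.Perm.swap b a q)).trans ?_
        rw [← heq]; exact hle.1
      · exact pairwise_swap (heq ▸ hle.2) hb.1
    have hstep : SwapStep V prec ((p' ++ [b]) ++ a :: q) (p' ++ a :: b :: q) :=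
      ⟨⟨p', b, a, q, heq, rfl, hb.1, hb.2⟩, hle'⟩
    have hrest := ih (b :: q) hle' (fun x hx => hp x (by simp [hx]))
    have : a :: (p' ++ b :: q) = a :: ((p' ++ [b]) ++ q) := by simp
    exact Relation.ReflTransGen.head hstep (this ▸ hrest)

private lemma lift_cons {ι : Type} [DecidableEq ι] {V : Finset ι} {prec : ι → ι → Prop}
    {a : ι} (ha : a ∈ V) (hmin : ∀ y ∈ V.erase a, ¬ prec y a) {t t' : List ι}
    (h : SwapStep (V.erase a) prec t t') : SwapStep V prec (a :: t) (a :: t') := by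
  obtain ⟨⟨u, x, y, v, e1, e2, hxy, hyx⟩, hperm, hpw⟩ := h
  refine ⟨⟨a :: u, x, y, v, by simp [e1], by simp [e2], hxy, hyx⟩, ?_, ?_⟩
  · have h1 : t'.Perm (V.toList.erase a) := hperm.trans (erase_toList_perm V a)
    have h2 : a ∈ V.toList := Finset.mem_toList.2 ha
    exact (h1.cons a).trans (List.perm_cons_erase h2).symm
  · refine List.Pairwise.cons ?_ hpw
    intro y hy
    have : y ∈ V.erase a := by
      rw [← Finset.mem_toList]
      exact hperm.mem_iff.1 hy
    exact hmin y this

/-- Any two linear extensions of a strict partial order on a finite set are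
    connected by adjacent transpositions of incomparable elements, all
    intermediate lists being linear extensions. -/
theorem linext_connected {ι : Type} [DecidableEq ι]
    (V : Finset ι) (prec : ι → ι → Prop)
    (hirr : ∀ x, ¬ prec x x)
    (htrans : ∀ x y z, prec x y → prec y z → prec x z)
    (l1 l2 : List ι)
    (h1 : IsLinExt V prec l1) (h2 : IsLinExt V prec l2) :
    Relation.ReflTransGen (SwapStep V prec) l1 l2 := by
  induction l2 generalizing V l1 with
  | nil =>
    have : V.toList = [] := h2.1.symm.eq_nil
    have : l1 = [] := (this ▸ h1.1).eq_nil
    rw [this]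
  | cons a t2 ih =>
    have ha : a ∈ V := Finset.mem_toList.1 (h2.1.mem_iff.1 (by simp))
    have hmin : ∀ y ∈ V, y ≠ a → ¬ prec y a := by
      intro y hy hne
      have : y ∈ a :: t2 := h2.1.symm.mem_iff.1 (Finset.mem_toList.2 hy)
      have hyt : y ∈ t2 := by
        rcases List.mem_cons.1 this with h | h
        · exact absurd h hne
        · exact h
      exact (List.pairwise_cons.1 h2.2).1 y hyt
    have haM : a ∈ l1 := h1.1.symm.mem_iff.1 (Finset.mem_toList.2 ha)
    obtain ⟨p, q, hpq⟩ := List.append_of_mem haM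
    have hnd : l1.Nodup := h1.1.nodup_iff.2 V.nodup_toList
    have hanp : a ∉ p := by
      rw [hpq, List.nodup_append] at hnd
      intro hc
      exact hnd.2.2 a hc a (by simp) rfl
    have hp : ∀ x ∈ p, ¬ prec x a ∧ ¬ prec a x := by
      intro x hx
      constructor
      · refine hmin x ?_ ?_
        · exact Finset.mem_toList.1 (h1.1.mem_iff.1 (by rw [hpq]; simp [hx]))
        · rintro rfl; exact hanp hx
      · have := hpq ▸ h1.2
        rw [List.pairwise_append] at this
        exact this.2.2 x hx a (by simp)
    have hle1 : IsLinExt V prec (p ++ a :: q) := hpq ▸ h1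
    have hbubble := bubble V prec a p q hle1 hp
    have hlemid : IsLinExt V prec (a :: (p ++ q)) := by
      constructor
      · exact (List.perm_middle.symm.trans hle1.1)
      · refine List.Pairwise.cons ?_ ?_
        · intro y hy
          rcases List.mem_append.1 hy with h | h
          · exact (hp y h).1
          · have := hpq ▸ h1.2
            rw [List.pairwise_append] at this
            exact (List.pairwise_cons.1 this.2.1).1 y h
        · have hsub : (p ++ q).Sublist (p ++ a :: q) :=
            (List.sublist_cons_self a q).append_left p
          exact hle1.2.sublist hsub
      -- end
    have htail1 : IsLinExt (V.erase a) prec (p ++ q) := tail_linext hlemid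
    have htail2 : IsLinExt (V.erase a) prec t2 := tail_linext h2
    have hrec := ih (V.erase a) (p ++ q) htail1 htail2
    have hmin' : ∀ y ∈ V.erase a, ¬ prec y a := by
      intro y hy
      exact hmin y (Finset.mem_of_mem_erase hy) (Finset.ne_of_mem_erase hy)
    have hlift : Relation.ReflTransGen (SwapStep V prec) (a :: (p ++ q)) (a :: t2) :=
      Relation.ReflTransGen.lift (fun l => a :: l)
        (fun _ _ h => lift_cons ha hmin' h) _ _ hrec
    rw [hpq]
    exact hbubble.trans hlift
end

section
/- In any schedule (linear extension of happens-before), if an insert and a delete refer to the same unique identifier u, then the insert of u appears before the delete of u, given that a delete of u may only be initiated at a site whose current state contains a binding for u, and only inserts create bindings. -/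
/-- Edit operations on the abstract atom buffer. -/
inductive Op (U A : Type) : Type
  | ins (u : U) (a : A) : Op U A
  | del (u : U) : Op U A

/-- Semantics: states are finite-support maps from uids to optional atoms. -/
def applyOp {U A : Type} [DecidableEq U] (o : Op U A) (s : U → Option A) :
    U → Option A :=
  match o with
  | .ins u a => Function.update s u (some a)
  | .del u => Function.update s u none

lemma foldl_ne_none_exists_ins {U A ι : Type} [DecidableEq U] (op : ι → Op U A) (u : U) :
    ∀ (P : List ι) (s : U → Option A),
      (P.foldl (fun s j => applyOp (op j) s) s) u ≠ none →
      (∃ j ∈ P, ∃ a, op j = Op.ins u a) ∨ s u ≠ none := by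
  intro P
  induction P with
  | nil => intro s h; exact Or.inr h
  | cons j P ih =>
    intro s h
    rcases ih _ h with h' | h'
    · obtain ⟨k, hk, hk'⟩ := h'
      exact Or.inl ⟨k, List.mem_cons_of_mem _ hk, hk'⟩
    · cases hj : op j with
      | ins u' a =>
        by_cases hu : u' = u
        · subst hu; exact Or.inl ⟨j, List.mem_cons_self, a, hj⟩
        · right
          simp only [applyOp, hj] at h'
          rwa [Function.update_of_ne (fun h => hu h.symm)] at h'
      | del u' =>
        right
        by_cases hu : u' = u
        · subst hu; simp [applyOp, hj] at h'
        · simp only [applyOp, hj] at h'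
          rwa [Function.update_of_ne (fun h => hu h.symm)] at h'

lemma pair_sublist_of_mem {ι : Type} {i d : ι} :
    ∀ {l : List ι}, i ∈ l → d ∈ l → i ≠ d →
      [i, d].Sublist l ∨ [d, i].Sublist l := by
  intro l
  induction l with
  | nil => simp
  | cons a l ih =>
    intro hi hd hne
    rcases List.mem_cons.mp hi with rfl | hi2
    · have hd' : d ∈ l := by
        rcases List.mem_cons.mp hd with rfl | h
        · exact absurd rfl hne
        · exact h
      exact Or.inl ((List.singleton_sublist.mpr hd').cons₂ _)
    · rcases List.mem_cons.mp hd with rfl | hd'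
      · exact Or.inr ((List.singleton_sublist.mpr hi2).cons₂ _)
      · rcases ih hi2 hd' hne with h | h
        · exact Or.inl (h.cons a)
        · exact Or.inr (h.cons a)

/-- In any schedule (a linear extension of happens-before), the insert of `u`
    appears before any delete of `u`, given that the delete's initiator had
    executed a happens-before-prior prefix whose state contains `u`, and `u`
    is inserted by exactly one insert operation. -/
theorem insert_before_delete {U A ι : Type} [DecidableEq U] [DecidableEq ι]
    (op : ι → Op U A) (hb : ι → ι → Prop)
    (l : List ι) (hnodup : l.Nodup)
    (hext : l.Pairwise (fun x y => ¬ hb y x))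
    (u : U) (i d : ι) (hi : i ∈ l) (hd : d ∈ l)
    (hopd : op d = Op.del u)
    (huniq : ∀ j ∈ l, (∃ a : A, op j = Op.ins u a) ↔ j = i)
    (P : List ι)
    (hPhb : ∀ j ∈ P, hb j d)
    (hPmem : ∀ j ∈ P, j ∈ l)
    (hpre : (P.foldl (fun s j => applyOp (op j) s) (fun _ => none)) u ≠ none) :
    [i, d].Sublist l := by
  rcases foldl_ne_none_exists_ins op u P _ hpre with ⟨j, hjP, a, hja⟩ | h
  · have hji : j = i := (huniq j (hPmem j hjP)).mp ⟨a, hja⟩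
    subst hji
    have hhb : hb j d := hPhb j hjP
    have hne : j ≠ d := by
      intro h; rw [h, hopd] at hja; cases hja
    rcases pair_sublist_of_mem hi hd hne with h | h
    · exact h
    · exfalso
      have := (hext.sublist h)
      simp only [List.pairwise_cons] at this
      exact this.1 j (by simp) hhb
  · simp at h
end

section
/- Extending the convergence theorem with a common suffix: under the hypotheses of the CRDT convergence theorem, if O and O' partition the operation set such that no operation of O' happens-before any operation of O, and every op in O either happens-before or is concurrent with every op in O', then every schedule's final state equals the final state of some schedule executing all of O first and then all of O'; hence all schedules share the state reached after the O-prefix up to equivalence. -/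
private lemma move_front {S ι : Type} (f : ι → S → S) (a : ι) :
    ∀ (u v : List ι), (∀ b ∈ u, f b ∘ f a = f a ∘ f b) → ∀ s : S,
      (u ++ a :: v).foldl (fun s i => f i s) s
        = (u ++ v).foldl (fun s i => f i s) (f a s) := by
  intro u
  induction u with
  | nil => intro v _ s; rfl
  | cons b u ih =>
    intro v hc s
    have h1 : f b (f a s) = f a (f b s) := congrFun (hc b (by simp)) s
    simp only [List.cons_append, List.foldl_cons]
    rw [ih v (fun c hcu => hc c (by simp [hcu])) (f b s), h1]

private lemma conv_lemma {S ι : Type} (f : ι → S → S) (hb : ι → ι → Prop) :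
    ∀ (l₁ l₂ : List ι), l₁.Perm l₂ → l₁.Nodup →
      (∀ i ∈ l₁, ∀ j ∈ l₁, ¬ hb i j → ¬ hb j i → f i ∘ f j = f j ∘ f i) →
      l₁.Pairwise (fun i j => ¬ hb j i) → l₂.Pairwise (fun i j => ¬ hb j i) →
      ∀ s : S, l₁.foldl (fun s i => f i s) s = l₂.foldl (fun s i => f i s) s := by
  intro l₁
  induction l₁ with
  | nil =>
    intro l₂ hp _ _ _ _ s
    rw [hp.symm.eq_nil]
  | cons a t ih =>
    intro l₂ hp hnd hcomm hpw1 hpw2 s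
    have ha : a ∈ l₂ := hp.subset (by simp)
    obtain ⟨u, v, rfl⟩ := List.append_of_mem ha
    have hperm : t.Perm (u ++ v) := (hp.trans List.perm_middle).cons_inv
    have hnd2 : (u ++ a :: v).Nodup := hp.nodup hnd
    have hanotu : a ∉ u := fun h =>
      (List.disjoint_of_nodup_append hnd2) h (by simp)
    -- every b ∈ u is in t
    have hbu : ∀ b ∈ u, b ∈ t := by
      intro b hb'
      have : b ∈ a :: t := hp.symm.subset (by simp [hb'])
      rcases this with _ | h
      · exact absurd hb' hanotu
      · assumption
    have hpw2' := List.pairwise_append.mp hpw2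
    have hcommu : ∀ b ∈ u, f b ∘ f a = f a ∘ f b := by
      intro b hb'
      have h1 : ¬ hb b a := (List.pairwise_cons.mp hpw1).1 b (hbu b hb')
      have h2 : ¬ hb a b := hpw2'.2.2 b hb' a (by simp)
      exact hcomm b (by simp [hbu b hb']) a (by simp) h1 h2
    rw [move_front f a u v hcommu s]
    simp only [List.foldl_cons]
    refine ih (u ++ v) hperm (List.nodup_cons.mp hnd).2
      (fun i hi j hj hij hji => hcomm i (by simp [hi]) j (by simp [hj]) hij hji)
      (List.pairwise_cons.mp hpw1).2 ?_ (f a s)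
    exact hpw2.sublist ((List.sublist_cons_self a v).append_left u)

/-- Convergence with a common prefix: if `V = O ⊎ O'` and no operation of `O'`
    happens-before any operation of `O`, then every schedule's final state is
    that of a schedule executing all of `O` first and then all of `O'`;
    moreover the state reached after the `O`-prefix is the same for all
    schedules. -/
theorem crdt_convergence_prefix {S ι : Type} [DecidableEq ι]
    (V O O' : Finset ι) (f : ι → S → S) (hb : ι → ι → Prop)
    (hirr : ∀ i, ¬ hb i i)
    (htrans : ∀ i j k, hb i j → hb j k → hb i k)
    (hcomm : ∀ i ∈ V, ∀ j ∈ V, ¬ hb i j → ¬ hb j i →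
      (f i) ∘ (f j) = (f j) ∘ (f i))
    (hdisj : Disjoint O O') (hunion : O ∪ O' = V)
    (hsplit : ∀ o' ∈ O', ∀ o ∈ O, ¬ hb o' o)
    (s0 : S) :
    ∃ sO : S,
      ∀ l : List ι, l.Perm V.toList → l.Pairwise (fun i j => ¬ hb j i) →
        ∃ lO lO' : List ι,
          lO.Perm O.toList ∧ lO'.Perm O'.toList ∧
          (lO ++ lO').Pairwise (fun i j => ¬ hb j i) ∧
          lO.foldl (fun s i => f i s) s0 = sO ∧
          l.foldl (fun s i => f i s) s0 =
            (lO ++ lO').foldl (fun s i => f i s) s0 := by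
  classical
  have hOV : O ⊆ V := hunion ▸ Finset.subset_union_left
  have hO'V : O' ⊆ V := hunion ▸ Finset.subset_union_right
  -- filter of a schedule is a permutation of the corresponding sub-Finset's list
  have hfilt : ∀ (l : List ι), l.Perm V.toList → ∀ (W : Finset ι), W ⊆ V →
      (l.filter (· ∈ W)).Perm W.toList := by
    intro l hl W hWV
    have h1 : (l.filter (· ∈ W)).Perm (V.toList.filter (· ∈ W)) := hl.filter _
    refine h1.trans ?_
    rw [← Multiset.coe_eq_coe, Finset.coe_toList]
    have h2 : (V.toList.filter (· ∈ W) : Multiset ι) = (V.filter (· ∈ W)).val := by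
      rw [Finset.filter_val, ← Finset.coe_toList V, Multiset.filter_coe]
    rw [h2, Finset.filter_mem_eq_inter, Finset.inter_eq_right.mpr hWV]
  -- basic facts for a given valid schedule
  have hmemO' : ∀ (l : List ι), l.Perm V.toList → ∀ a ∈ l, (decide (a ∈ O') = !decide (a ∈ O)) := by
    intro l hl a hal
    have haV : a ∈ V := Finset.mem_toList.mp (hl.subset hal)
    by_cases h : a ∈ O
    · simp [h, Finset.disjoint_left.mp hdisj h]
    · have : a ∈ O' := by
        rw [← hunion] at haV
        rcases Finset.mem_union.mp haV with h' | h'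
        · exact absurd h' h
        · exact h'
      simp [h, this]
  by_cases hex : ∃ l : List ι, l.Perm V.toList ∧ l.Pairwise (fun i j => ¬ hb j i)
  · obtain ⟨l₀, hl₀p, hl₀pw⟩ := hex
    refine ⟨(l₀.filter (· ∈ O)).foldl (fun s i => f i s) s0, ?_⟩
    intro l hlp hlpw
    refine ⟨l.filter (· ∈ O), l.filter (· ∈ O'), hfilt l hlp O hOV, hfilt l hlp O' hO'V, ?_, ?_, ?_⟩
    case _ =>
      -- pairwise of the concatenation
      rw [List.pairwise_append]
      refine ⟨hlpw.sublist (List.filter_sublist (l := l)), hlpw.sublist (List.filter_sublist (l := l)), ?_⟩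
      intro i hi j hj
      have hiO : i ∈ O := by simpa using (List.mem_filter.mp hi).2
      have hjO' : j ∈ O' := by simpa using (List.mem_filter.mp hj).2
      exact hsplit j hjO' i hiO
    case _ =>
      -- fold over lO equals sO
      have h1 : (l.filter (· ∈ O)).Perm (l₀.filter (· ∈ O)) :=
        (hfilt l hlp O hOV).trans (hfilt l₀ hl₀p O hOV).symm
      refine conv_lemma f hb _ _ h1 ((hlp.nodup_iff.mpr V.nodup_toList).sublist (List.filter_sublist (l := l))) ?_
        (hlpw.sublist (List.filter_sublist (l := l))) (hl₀pw.sublist (List.filter_sublist (l := l₀))) s0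
      intro i hi j hj hij hji
      have hiV : i ∈ V := Finset.mem_toList.mp (hlp.subset (List.mem_of_mem_filter hi))
      have hjV : j ∈ V := Finset.mem_toList.mp (hlp.subset (List.mem_of_mem_filter hj))
      exact hcomm i hiV j hjV hij hji
    case _ =>
      -- fold over l equals fold over lO ++ lO'
      have hsplit_perm : (l.filter (· ∈ O) ++ l.filter (· ∈ O')).Perm l := by
        have : l.filter (· ∈ O') = l.filter (fun a => !decide (a ∈ O)) :=
          List.filter_congr (hmemO' l hlp)
        rw [this]
        exact List.filter_append_perm _ l
      have hpw : (l.filter (· ∈ O) ++ l.filter (· ∈ O')).Pairwise (fun i j => ¬ hb j i) := by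
        rw [List.pairwise_append]
        refine ⟨hlpw.sublist (List.filter_sublist (l := l)), hlpw.sublist (List.filter_sublist (l := l)), ?_⟩
        intro i hi j hj
        have hiO : i ∈ O := by simpa using (List.mem_filter.mp hi).2
        have hjO' : j ∈ O' := by simpa using (List.mem_filter.mp hj).2
        exact hsplit j hjO' i hiO
      refine conv_lemma f hb l _ hsplit_perm.symm (hlp.nodup_iff.mpr V.nodup_toList) ?_ hlpw hpw s0
      intro i hi j hj hij hji
      exact hcomm i (Finset.mem_toList.mp (hlp.subset hi)) j (Finset.mem_toList.mp (hlp.subset hj)) hij hji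
  · exact ⟨s0, fun l hlp hlpw => absurd ⟨l, hlp, hlpw⟩ hex⟩
end
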